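/- As k → ∞, Δ_{k+1} / (√(2π)·F(k)) → 1, where Δ_{k+1} = ∫_0^1 u(1-u)e^{k+u}k!/(k+u)^{k+2} du and F(k) = ∫_0^1 e^{(u-1/2)²/(4k)}·u(1-u)/(k+u)^{3/2} du. -/

import Mathlib

open Real Filter intervalIntegral

lemma psi_bounds {K u : ℝ} (hK : 1 ≤ K) (h0 : 0 ≤ u) (h1 : u ≤ 1) :
    |u - (K + 1/2) * (Real.log (K + u) - Real.log K) - (u - 1/2)^2 / (4*K)| ≤ 2 / K := by
  have hKpos : 0 < K := by linarith
  have hvpos : 0 < K + u := by linarith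
  have hlog : Real.log (K + u) - Real.log K = Real.log ((K+u)/K) := by
    rw [Real.log_div (by positivity) (by positivity)]
  have hub : Real.log ((K+u)/K) ≤ u/K := by
    have := Real.log_le_sub_one_of_pos (x := (K+u)/K) (by positivity)
    have h : (K+u)/K - 1 = u/K := by field_simp; ring
    linarith
  have hlb : (u*K - u^2)/K^2 ≤ Real.log ((K+u)/K) := by
    have h2 := Real.one_sub_inv_le_log_of_pos (x := (K+u)/K) (by positivity)
    rw [inv_div] at h2
    have e1 : 1 - K/(K+u) = u/(K+u) := by field_simp; ring
    rw [e1] at h2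
    refine le_trans ?_ h2
    rw [div_le_div_iff₀ (by positivity) (by positivity)]
    nlinarith [mul_nonneg (mul_nonneg h0 h0) h0]
  rw [hlog, abs_le]
  have hq0 : 0 ≤ (u - 1/2)^2 / (4*K) := by positivity
  have hq1 : (u - 1/2)^2 / (4*K) ≤ 1/(4*K) := by
    apply div_le_div_of_nonneg_right ?_ (by positivity)
    · nlinarith
  have hKhalf : (0:ℝ) < K + 1/2 := by linarith
  constructor
  · -- lower: -(2/K) ≤ ψ;  use log ≤ u/K
    have h4 : (K + 1/2) * Real.log ((K+u)/K) ≤ (K + 1/2) * (u/K) := by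
      exact mul_le_mul_of_nonneg_left hub (le_of_lt hKhalf)
    have h5 : (K + 1/2) * (u/K) = u + u/(2*K) := by field_simp
    have h6 : u/(2*K) ≤ 1/(2*K) := by
      apply div_le_div_of_nonneg_right h1 (by positivity) |>.trans_eq rfl
    have h7 : 1/(2*K) + 1/(4*K) ≤ 2/K := by
      rw [div_add_div _ _ (by positivity) (by positivity), div_le_div_iff₀ (by positivity) (by positivity)]
      ring_nf; nlinarith
    linarith
  · -- upper: ψ ≤ 2/K; use log ≥ (uK - u²)/K²
    have h4 : (K + 1/2) * ((u*K - u^2)/K^2) ≤ (K + 1/2) * Real.log ((K+u)/K) := by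
      exact mul_le_mul_of_nonneg_left hlb (le_of_lt hKhalf)
    have h5 : u - (K + 1/2) * ((u*K - u^2)/K^2) ≤ 2/K := by
      have e2 : u - (K + 1/2) * ((u*K - u^2)/K^2) = (u*K^2 - (K+1/2)*(u*K-u^2))/K^2 := by
        field_simp
      rw [e2, div_le_div_iff₀ (by positivity) (by positivity)]
      have hu2 : u^2 ≤ 1 := by nlinarith
      have hKK : K ≤ K^2 := by nlinarith
      nlinarith [mul_le_mul_of_nonneg_right hu2 (by positivity : (0:ℝ) ≤ K^2),
        mul_le_mul_of_nonneg_right hu2 (le_of_lt hKpos),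
        mul_nonneg h0 (by positivity : (0:ℝ) ≤ K^2)]
    linarith
  done

lemma core_eq (k : ℕ) (hk : 1 ≤ k) {u : ℝ} (h0 : 0 ≤ u) (h1 : u ≤ 1) :
    Real.exp ((k:ℝ) + u) * (Nat.factorial k : ℝ) / ((k:ℝ) + u) ^ (k + 2)
    = Stirling.stirlingSeq k / Real.sqrt π *
        Real.exp (u - ((k:ℝ) + 1/2) * (Real.log ((k:ℝ) + u) - Real.log k) - (u - 1/2)^2/(4*k)) *
      (Real.sqrt (2*π) * Real.exp ((u - 1/2)^2/(4*k)) / ((k:ℝ) + u) ^ ((3:ℝ)/2)) := by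
  have hK1 : (1:ℝ) ≤ (k:ℝ) := by exact_mod_cast hk
  have hKpos : (0:ℝ) < (k:ℝ) := by linarith
  have hv : (0:ℝ) < (k:ℝ) + u := by linarith
  have hfac : (0:ℝ) < (Nat.factorial k : ℝ) := by exact_mod_cast Nat.factorial_pos k
  have hsqrtpi : (0:ℝ) < Real.sqrt π := Real.sqrt_pos.mpr Real.pi_pos
  have hsqrt2pi : (0:ℝ) < Real.sqrt (2*π) := Real.sqrt_pos.mpr (by positivity)
  have hsqrt2k : (0:ℝ) < Real.sqrt (2*(k:ℝ)) := Real.sqrt_pos.mpr (by positivity)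
  have hst : 0 < Stirling.stirlingSeq k := by
    rw [Stirling.stirlingSeq]
    exact div_pos hfac (mul_pos hsqrt2k (pow_pos (div_pos hKpos (Real.exp_pos 1)) k))
  have hrpow : (0:ℝ) < ((k:ℝ) + u) ^ ((3:ℝ)/2) := Real.rpow_pos_of_pos hv _
  have hL : (0:ℝ) < Real.exp ((k:ℝ) + u) * (Nat.factorial k : ℝ) / ((k:ℝ) + u) ^ (k + 2) := by
    positivity
  have hR : (0:ℝ) < Stirling.stirlingSeq k / Real.sqrt π *
        Real.exp (u - ((k:ℝ) + 1/2) * (Real.log ((k:ℝ) + u) - Real.log k) - (u - 1/2)^2/(4*k)) *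
      (Real.sqrt (2*π) * Real.exp ((u - 1/2)^2/(4*k)) / ((k:ℝ) + u) ^ ((3:ℝ)/2)) :=
    mul_pos (mul_pos (div_pos hst hsqrtpi) (Real.exp_pos _))
      (div_pos (mul_pos hsqrt2pi (Real.exp_pos _)) hrpow)
  rw [← Real.exp_log hL, ← Real.exp_log hR]
  congr 1
  rw [Real.log_div (ne_of_gt (mul_pos (Real.exp_pos _) hfac)) (ne_of_gt (pow_pos hv _)),
    Real.log_mul (Real.exp_ne_zero _) (ne_of_gt hfac),
    Real.log_mul (ne_of_gt (mul_pos (div_pos hst hsqrtpi) (Real.exp_pos _)))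
      (ne_of_gt (div_pos (mul_pos hsqrt2pi (Real.exp_pos _)) hrpow)),
    Real.log_mul (ne_of_gt (div_pos hst hsqrtpi)) (Real.exp_ne_zero _),
    Real.log_div (ne_of_gt hst) (ne_of_gt hsqrtpi),
    Real.log_div (ne_of_gt (mul_pos hsqrt2pi (Real.exp_pos _))) (ne_of_gt hrpow),
    Real.log_mul (ne_of_gt hsqrt2pi) (Real.exp_ne_zero _),
    Real.log_exp, Real.log_exp, Real.log_exp, Real.log_pow, Real.log_rpow hv,
    Real.log_sqrt (le_of_lt Real.pi_pos), Real.log_sqrt (by positivity : (0:ℝ) ≤ 2*π),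
    Stirling.stirlingSeq,
    Real.log_div (ne_of_gt hfac) (ne_of_gt (mul_pos hsqrt2k (pow_pos (div_pos hKpos (Real.exp_pos 1)) k))),
    Real.log_mul (ne_of_gt hsqrt2k) (ne_of_gt (pow_pos (div_pos hKpos (Real.exp_pos 1)) k)),
    Real.log_pow, Real.log_div (ne_of_gt hKpos) (Real.exp_ne_zero 1), Real.log_exp,
    Real.log_sqrt (by positivity : (0:ℝ) ≤ 2*(k:ℝ)),
    Real.log_mul (by norm_num) (ne_of_gt hKpos),
    Real.log_mul (by norm_num) (ne_of_gt Real.pi_pos)]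
  push_cast
  ring

lemma g_bounds (k : ℕ) (hk : 1 ≤ k) {u : ℝ} (h0 : 0 ≤ u) (h1 : u ≤ 1) :
    (Stirling.stirlingSeq k / Real.sqrt π * Real.exp (-(2/(k:ℝ)))) *
        (Real.sqrt (2*π) * (Real.exp ((u - 1/2)^2/(4*(k:ℝ))) * (u * (1-u)) / ((k:ℝ)+u) ^ ((3:ℝ)/2)))
      ≤ u * (1 - u) * Real.exp ((k:ℝ) + u) * (Nat.factorial k : ℝ) / ((k:ℝ) + u) ^ (k + 2) ∧
    u * (1 - u) * Real.exp ((k:ℝ) + u) * (Nat.factorial k : ℝ) / ((k:ℝ) + u) ^ (k + 2)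
      ≤ (Stirling.stirlingSeq k / Real.sqrt π * Real.exp (2/(k:ℝ))) *
        (Real.sqrt (2*π) * (Real.exp ((u - 1/2)^2/(4*(k:ℝ))) * (u * (1-u)) / ((k:ℝ)+u) ^ ((3:ℝ)/2))) := by
  have hK1 : (1:ℝ) ≤ (k:ℝ) := by exact_mod_cast hk
  have hKpos : (0:ℝ) < (k:ℝ) := by linarith
  have hv : (0:ℝ) < (k:ℝ) + u := by linarith
  have hw : 0 ≤ u * (1 - u) := by nlinarith
  have habs := psi_bounds hK1 h0 h1
  rw [abs_le] at habs
  have hgw : u * (1 - u) * Real.exp ((k:ℝ) + u) * (Nat.factorial k : ℝ) / ((k:ℝ) + u) ^ (k + 2)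
      = (u * (1 - u)) * (Real.exp ((k:ℝ) + u) * (Nat.factorial k : ℝ) / ((k:ℝ) + u) ^ (k + 2)) := by
    ring
  have hst : 0 ≤ Stirling.stirlingSeq k / Real.sqrt π :=
    div_nonneg (by rw [Stirling.stirlingSeq]; positivity) (Real.sqrt_nonneg _)
  have hr : (0:ℝ) < ((k:ℝ)+u) ^ ((3:ℝ)/2) := Real.rpow_pos_of_pos hv _
  have hB : 0 ≤ Real.sqrt (2*π) * Real.exp ((u - 1/2)^2/(4*(k:ℝ))) / ((k:ℝ)+u) ^ ((3:ℝ)/2) :=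
    div_nonneg (by positivity) hr.le
  have key : ∀ x y : ℝ, x ≤ y →
      (u * (1-u)) * ((Stirling.stirlingSeq k / Real.sqrt π * Real.exp x) *
        (Real.sqrt (2*π) * Real.exp ((u - 1/2)^2/(4*(k:ℝ))) / ((k:ℝ)+u) ^ ((3:ℝ)/2)))
      ≤ (u * (1-u)) * ((Stirling.stirlingSeq k / Real.sqrt π * Real.exp y) *
        (Real.sqrt (2*π) * Real.exp ((u - 1/2)^2/(4*(k:ℝ))) / ((k:ℝ)+u) ^ ((3:ℝ)/2))) := by
    intro x y hxy
    exact mul_le_mul_of_nonneg_left (mul_le_mul_of_nonneg_right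
      (mul_le_mul_of_nonneg_left (Real.exp_le_exp.mpr hxy) hst) hB) hw
  constructor
  · rw [hgw, core_eq k hk h0 h1]
    have := key _ _ habs.1
    calc (Stirling.stirlingSeq k / Real.sqrt π * Real.exp (-(2/(k:ℝ)))) *
        (Real.sqrt (2*π) * (Real.exp ((u - 1/2)^2/(4*(k:ℝ))) * (u * (1-u)) / ((k:ℝ)+u) ^ ((3:ℝ)/2)))
        = (u * (1-u)) * ((Stirling.stirlingSeq k / Real.sqrt π * Real.exp (-(2/(k:ℝ)))) *
          (Real.sqrt (2*π) * Real.exp ((u - 1/2)^2/(4*(k:ℝ))) / ((k:ℝ)+u) ^ ((3:ℝ)/2))) := by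
          ring
      _ ≤ _ := this
      _ = _ := by ring
  · rw [hgw, core_eq k hk h0 h1]
    have := key _ _ habs.2
    calc u * (1-u) * (Stirling.stirlingSeq k / Real.sqrt π *
          Real.exp (u - ((k:ℝ) + 1/2) * (Real.log ((k:ℝ) + u) - Real.log k) - (u - 1/2)^2/(4*k)) *
          (Real.sqrt (2*π) * Real.exp ((u - 1/2)^2/(4*(k:ℝ))) / ((k:ℝ)+u) ^ ((3:ℝ)/2)))
        ≤ (u * (1-u)) * ((Stirling.stirlingSeq k / Real.sqrt π * Real.exp (2/(k:ℝ))) *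
          (Real.sqrt (2*π) * Real.exp ((u - 1/2)^2/(4*(k:ℝ))) / ((k:ℝ)+u) ^ ((3:ℝ)/2))) := this
      _ = _ := by ring

lemma intH (k : ℕ) (hk : 1 ≤ k) :
    IntervalIntegrable (fun u : ℝ =>
      Real.exp ((u - 1/2)^2/(4*(k:ℝ))) * (u * (1-u)) / ((k:ℝ)+u) ^ ((3:ℝ)/2)) MeasureTheory.volume 0 1 := by
  apply ContinuousOn.intervalIntegrable
  apply ContinuousOn.div
  · fun_prop
  · exact (continuous_const.add continuous_id).continuousOn.rpow_const
      (fun x _ => Or.inr (by norm_num))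
  · intro x hx
    rw [Set.uIcc_of_le (by norm_num)] at hx
    have hK1 : (1:ℝ) ≤ (k:ℝ) := by exact_mod_cast hk
    have : (0:ℝ) < (k:ℝ) + x := by have := hx.1; linarith
    exact ne_of_gt (Real.rpow_pos_of_pos this _)

lemma intG (k : ℕ) (hk : 1 ≤ k) :
    IntervalIntegrable (fun u : ℝ =>
      u * (1 - u) * Real.exp ((k:ℝ) + u) * (Nat.factorial k : ℝ) / ((k:ℝ)+u) ^ (k + 2)) MeasureTheory.volume 0 1 := by
  apply ContinuousOn.intervalIntegrable
  apply ContinuousOn.div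
  · fun_prop
  · fun_prop
  · intro x hx
    rw [Set.uIcc_of_le (by norm_num)] at hx
    have hK1 : (1:ℝ) ≤ (k:ℝ) := by exact_mod_cast hk
    have h : (0:ℝ) < (k:ℝ) + x := by have := hx.1; linarith
    exact ne_of_gt (pow_pos h _)

lemma IH_pos (k : ℕ) (hk : 1 ≤ k) :
    0 < ∫ u in (0:ℝ)..1,
      Real.exp ((u - 1/2)^2/(4*(k:ℝ))) * (u * (1-u)) / ((k:ℝ)+u) ^ ((3:ℝ)/2) := by
  apply intervalIntegral.intervalIntegral_pos_of_pos_on (intH k hk)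
  · intro x hx
    have hK1 : (1:ℝ) ≤ (k:ℝ) := by exact_mod_cast hk
    have h : (0:ℝ) < (k:ℝ) + x := by have := hx.1; linarith
    have := hx.1; have := hx.2
    exact div_pos (mul_pos (Real.exp_pos _) (by nlinarith)) (Real.rpow_pos_of_pos h _)
  · norm_num

theorem Delta_k_asymptotic :
    Filter.Tendsto (fun k : ℕ =>
      (∫ u in (0 : ℝ)..1,
          u * (1 - u) * Real.exp ((k : ℝ) + u) * (Nat.factorial k : ℝ) /
            ((k : ℝ) + u) ^ (k + 2)) /
        (Real.sqrt (2 * Real.pi) *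
          ∫ u in (0 : ℝ)..1,
            Real.exp ((u - 1 / 2) ^ 2 / (4 * k)) * (u * (1 - u)) /
              ((k : ℝ) + u) ^ ((3 : ℝ) / 2)))
      Filter.atTop (nhds 1) := by
  have hpi : (0:ℝ) < Real.sqrt π := Real.sqrt_pos.mpr Real.pi_pos
  have h2pi : (0:ℝ) < Real.sqrt (2*π) := Real.sqrt_pos.mpr (by positivity)
  have hS : Tendsto (fun k : ℕ => Stirling.stirlingSeq k / Real.sqrt π) atTop (nhds 1) := by
    have h2 := Stirling.tendsto_stirlingSeq_sqrt_pi.div_const (Real.sqrt π)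
    rwa [div_self (ne_of_gt hpi)] at h2
  have h2k : Tendsto (fun k : ℕ => 2/(k:ℝ)) atTop (nhds 0) := tendsto_const_div_atTop_nhds_zero_nat 2
  have hexp : Tendsto (fun k : ℕ => Real.exp (2/(k:ℝ))) atTop (nhds 1) := by
    have := (Real.continuous_exp.tendsto 0).comp h2k
    simpa [Function.comp_def] using this
  have hexpm : Tendsto (fun k : ℕ => Real.exp (-(2/(k:ℝ)))) atTop (nhds 1) := by
    have := (Real.continuous_exp.tendsto 0).comp (by simpa using h2k.neg)
    simpa [Function.comp_def] using this
  have hup : Tendsto (fun k : ℕ => Stirling.stirlingSeq k / Real.sqrt π * Real.exp (2/(k:ℝ)))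
      atTop (nhds 1) := by simpa using hS.mul hexp
  have hlo : Tendsto (fun k : ℕ => Stirling.stirlingSeq k / Real.sqrt π * Real.exp (-(2/(k:ℝ))))
      atTop (nhds 1) := by simpa using hS.mul hexpm
  apply tendsto_of_tendsto_of_tendsto_of_le_of_le' hlo hup
  · filter_upwards [eventually_ge_atTop 1] with k hk
    have hIH := IH_pos k hk
    have hden : 0 < Real.sqrt (2*π) * ∫ u in (0:ℝ)..1,
        Real.exp ((u - 1/2)^2/(4*(k:ℝ))) * (u * (1-u)) / ((k:ℝ)+u) ^ ((3:ℝ)/2) :=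
      mul_pos h2pi hIH
    rw [le_div_iff₀ hden]
    have hmono := intervalIntegral.integral_mono_on (by norm_num : (0:ℝ) ≤ 1)
      (((intH k hk).const_mul (Real.sqrt (2*π))).const_mul
        (Stirling.stirlingSeq k / Real.sqrt π * Real.exp (-(2/(k:ℝ)))))
      (intG k hk)
      (fun x hx => (g_bounds k hk hx.1 hx.2).1)
    rwa [intervalIntegral.integral_const_mul, intervalIntegral.integral_const_mul] at hmono
  · filter_upwards [eventually_ge_atTop 1] with k hk
    have hIH := IH_pos k hk
    have hden : 0 < Real.sqrt (2*π) * ∫ u in (0:ℝ)..1,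
        Real.exp ((u - 1/2)^2/(4*(k:ℝ))) * (u * (1-u)) / ((k:ℝ)+u) ^ ((3:ℝ)/2) :=
      mul_pos h2pi hIH
    rw [div_le_iff₀ hden]
    have hmono := intervalIntegral.integral_mono_on (by norm_num : (0:ℝ) ≤ 1)
      (intG k hk)
      (((intH k hk).const_mul (Real.sqrt (2*π))).const_mul
        (Stirling.stirlingSeq k / Real.sqrt π * Real.exp (2/(k:ℝ))))
      (fun x hx => (g_bounds k hk hx.1 hx.2).2)
    rwa [intervalIntegral.integral_const_mul, intervalIntegral.integral_const_mul] at hmono
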